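/- Characterization of the values of type ♯𝔹→♯𝔹: a closed λ-abstraction λx.t⃗ is a value of type ♯𝔹→♯𝔹 (i.e., λx.t⃗ ∈ ⟦♯𝔹→♯𝔹⟧) if and only if it represents a unitary operator F : ℂ² → ℂ². -/

import Mathlib

namespace LinAlg

/-! ### Syntax: pure values, pure terms, term distributions -/

mutual
inductive Val : Type where
  | var : ℕ → Val
  | lam : ℕ → Distr → Val
  | star : Val
  | pair : Val → Val → Val
  | inl : Val → Val
  | inr : Val → Val
inductive Term : Type where
  | val : Val → Term
  | app : Term → Term → Term
  | seq : Term → Distr → Term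
  | letp : ℕ → ℕ → Term → Distr → Term
  | matc : Term → ℕ → Distr → ℕ → Distr → Term
inductive Distr : Type where
  | zero : Distr
  | single : Term → Distr
  | add : Distr → Distr → Distr
  | smul : ℂ → Distr → Distr
end

noncomputable instance : DecidableEq Val := fun _ _ => Classical.dec _
noncomputable instance : DecidableEq Term := fun _ _ => Classical.dec _
noncomputable instance : DecidableEq Distr := fun _ _ => Classical.dec _

/-! ### The shallow congruence ≡ on term distributions -/

inductive Cong : Distr → Distr → Prop where
  | addZero (d : Distr) : Cong (d.add .zero) d
  | oneSmul (d : Distr) : Cong (Distr.smul 1 d) d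
  | smulSmul (a b : ℂ) (d : Distr) : Cong (Distr.smul a (Distr.smul b d)) (Distr.smul (a * b) d)
  | addComm (d₁ d₂ : Distr) : Cong (d₁.add d₂) (d₂.add d₁)
  | addAssoc (d₁ d₂ d₃ : Distr) : Cong ((d₁.add d₂).add d₃) (d₁.add (d₂.add d₃))
  | smulDistrib (a b : ℂ) (d : Distr) : Cong (Distr.smul (a + b) d) ((Distr.smul a d).add (Distr.smul b d))
  | smulAdd (a : ℂ) (d₁ d₂ : Distr) : Cong (Distr.smul a (d₁.add d₂)) ((Distr.smul a d₁).add (Distr.smul a d₂))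
  | refl (d : Distr) : Cong d d
  | symm {d₁ d₂ : Distr} : Cong d₁ d₂ → Cong d₂ d₁
  | trans {d₁ d₂ d₃ : Distr} : Cong d₁ d₂ → Cong d₂ d₃ → Cong d₁ d₃
  | addCongr {d₁ d₁' d₂ d₂' : Distr} : Cong d₁ d₁' → Cong d₂ d₂' → Cong (d₁.add d₂) (d₁'.add d₂')
  | smulCongr (a : ℂ) {d d' : Distr} : Cong d d' → Cong (Distr.smul a d) (Distr.smul a d')

/-! ### Free variables -/

mutual
def fvV : Val → Finset ℕ
  | .var y => {y}
  | .lam y b => fvD b \ {y}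
  | .star => ∅
  | .pair v₁ v₂ => fvV v₁ ∪ fvV v₂
  | .inl v => fvV v
  | .inr v => fvV v
def fvT : Term → Finset ℕ
  | .val v => fvV v
  | .app s t => fvT s ∪ fvT t
  | .seq t s => fvT t ∪ fvD s
  | .letp y z t s => fvT t ∪ (fvD s \ {y, z})
  | .matc t y s₁ z s₂ => fvT t ∪ (fvD s₁ \ {y}) ∪ (fvD s₂ \ {z})
def fvD : Distr → Finset ℕ
  | .zero => ∅
  | .single t => fvT t
  | .add d₁ d₂ => fvD d₁ ∪ fvD d₂
  | .smul _ d => fvD d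
end

/-! ### Pure substitution -/

mutual
def substV (x : ℕ) (w : Val) : Val → Val
  | .var y => if y = x then w else .var y
  | .lam y b => if y = x then .lam y b else .lam y (substD x w b)
  | .star => .star
  | .pair v₁ v₂ => .pair (substV x w v₁) (substV x w v₂)
  | .inl v => .inl (substV x w v)
  | .inr v => .inr (substV x w v)
def substT (x : ℕ) (w : Val) : Term → Term
  | .val v => .val (substV x w v)
  | .app s t => .app (substT x w s) (substT x w t)
  | .seq t s => .seq (substT x w t) (substD x w s)
  | .letp y z t s =>
      .letp y z (substT x w t) (if y = x ∨ z = x then s else substD x w s)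
  | .matc t y s₁ z s₂ =>
      .matc (substT x w t) y (if y = x then s₁ else substD x w s₁)
        z (if z = x then s₂ else substD x w s₂)
def substD (x : ℕ) (w : Val) : Distr → Distr
  | .zero => .zero
  | .single t => .single (substT x w t)
  | .add d₁ d₂ => .add (substD x w d₁) (substD x w d₂)
  | .smul a d => .smul a (substD x w d)
end

/-! ### Linear extensions of the syntactic constructs -/

def appTD (s : Term) : Distr → Distr
  | .zero => .zero
  | .single t => .single (.app s t)
  | .add d₁ d₂ => .add (appTD s d₁) (appTD s d₂)
  | .smul a d => .smul a (appTD s d)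

def appDV : Distr → Val → Distr
  | .zero, _ => .zero
  | .single t, v => .single (.app t (.val v))
  | .add d₁ d₂, v => .add (appDV d₁ v) (appDV d₂ v)
  | .smul a d, v => .smul a (appDV d v)

def seqD : Distr → Distr → Distr
  | .zero, _ => .zero
  | .single t, s => .single (.seq t s)
  | .add d₁ d₂, s => .add (seqD d₁ s) (seqD d₂ s)
  | .smul a d, s => .smul a (seqD d s)

def letpD (x y : ℕ) : Distr → Distr → Distr
  | .zero, _ => .zero
  | .single t, s => .single (.letp x y t s)
  | .add d₁ d₂, s => .add (letpD x y d₁ s) (letpD x y d₂ s)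
  | .smul a d, s => .smul a (letpD x y d s)

def matcD : Distr → ℕ → Distr → ℕ → Distr → Distr
  | .zero, _, _, _, _ => .zero
  | .single t, y, s₁, z, s₂ => .single (.matc t y s₁ z s₂)
  | .add d₁ d₂, y, s₁, z, s₂ => .add (matcD d₁ y s₁ z s₂) (matcD d₂ y s₁ z s₂)
  | .smul a d, y, s₁, z, s₂ => .smul a (matcD d y s₁ z s₂)

/-- Bilinear application of distributions:  (Σᵢ αᵢ·tᵢ)(Σⱼ βⱼ·sⱼ) = Σᵢⱼ αᵢβⱼ·(tᵢ sⱼ). -/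
def appD : Distr → Distr → Distr
  | .zero, _ => .zero
  | .single t, w => appTD t w
  | .add d₁ d₂, w => .add (appD d₁ w) (appD d₂ w)
  | .smul a d, w => .smul a (appD d w)

/-- Bilinear substitution  d⟨x := w⃗⟩ = Σⱼ βⱼ · d[x := wⱼ]  (recursion on the value
distribution w⃗; non-value summands are junk and are sent to 0⃗). -/
def bsubst (x : ℕ) (d : Distr) : Distr → Distr
  | .zero => .zero
  | .single (.val w) => substD x w d
  | .single _ => .zero
  | .add w₁ w₂ => .add (bsubst x d w₁) (bsubst x d w₂)
  | .smul a w => .smul a (bsubst x d w)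

/-! ### Evaluation -/

inductive Atom : Term → Distr → Prop where
  | beta (x : ℕ) (b : Distr) (v : Val) :
      Atom (.app (.val (.lam x b)) (.val v)) (substD x v b)
  | seqStar (s : Distr) : Atom (.seq (.val .star) s) s
  | letPair (x y : ℕ) (v w : Val) (s : Distr) :
      Atom (.letp x y (.val (.pair v w)) s) (substD y w (substD x v s))
  | matchInl (v : Val) (y : ℕ) (s₁ : Distr) (z : ℕ) (s₂ : Distr) :
      Atom (.matc (.val (.inl v)) y s₁ z s₂) (substD y v s₁)
  | matchInr (v : Val) (y : ℕ) (s₁ : Distr) (z : ℕ) (s₂ : Distr) :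
      Atom (.matc (.val (.inr v)) y s₁ z s₂) (substD z v s₂)
  | appR (s : Term) {t : Term} {d : Distr} : Atom t d → Atom (.app s t) (appTD s d)
  | appL (v : Val) {t : Term} {d : Distr} : Atom t d → Atom (.app t (.val v)) (appDV d v)
  | seqC (s : Distr) {t : Term} {d : Distr} : Atom t d → Atom (.seq t s) (seqD d s)
  | letC (x y : ℕ) (s : Distr) {t : Term} {d : Distr} :
      Atom t d → Atom (.letp x y t s) (letpD x y d s)
  | matcC (y : ℕ) (s₁ : Distr) (z : ℕ) (s₂ : Distr) {t : Term} {d : Distr} :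
      Atom t d → Atom (.matc t y s₁ z s₂) (matcD d y s₁ z s₂)

/-- One-step evaluation:  t⃗ ≻ t⃗′. -/
def Step (d d' : Distr) : Prop :=
  ∃ (a : ℂ) (s : Term) (s' r : Distr),
    Cong d (Distr.add (.smul a (.single s)) r) ∧
    Cong d' (Distr.add (.smul a s') r) ∧ Atom s s'

/-- Evaluation  t⃗ ≻≻ t⃗′:  reflexive-transitive closure of one-step evaluation. -/
def Eval : Distr → Distr → Prop := Relation.ReflTransGen Step

/-! ### Value distributions, inner product, norm -/

def IsValT : Term → Prop
  | .val _ => True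
  | _ => False

def IsValD : Distr → Prop
  | .zero => True
  | .single t => IsValT t
  | .add d₁ d₂ => IsValD d₁ ∧ IsValD d₂
  | .smul _ d => IsValD d

/-- The set of closed value distributions. -/
def ClosedValD : Set Distr := {d | IsValD d ∧ fvD d = ∅}

/-- Total coefficient of the pure term `t` in the distribution `d`. -/
noncomputable def coeff : Distr → Term → ℂ
  | .zero, _ => 0
  | .single s, t => if s = t then 1 else 0
  | .add d₁ d₂, t => coeff d₁ t + coeff d₂ t
  | .smul a d, t => a * coeff d t

/-- The domain of a distribution (all pure terms occurring in it, even with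
coefficient 0). -/
noncomputable def domD : Distr → Finset Term
  | .zero => ∅
  | .single t => {t}
  | .add d₁ d₂ => domD d₁ ∪ domD d₂
  | .smul _ d => domD d

/-- The inner product ⟨v⃗|w⃗⟩ on value distributions. -/
noncomputable def innerD (v w : Distr) : ℂ :=
  ∑ t ∈ domD v, (starRingEnd ℂ) (coeff v t) * coeff w t

/-- The pseudo-ℓ²-norm ‖v⃗‖. -/
noncomputable def normD (v : Distr) : ℝ := Real.sqrt (innerD v v).re

/-- The unit sphere S of closed value distributions of norm 1. -/
def Sphere : Set Distr := {d | d ∈ ClosedValD ∧ normD d = 1}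

/-- Span(X): weak linear combinations of elements of X (taken modulo ≡). -/
inductive Span (X : Set Distr) : Distr → Prop where
  | mem {d : Distr} : d ∈ X → Span X d
  | zero : Span X .zero
  | add {d₁ d₂ : Distr} : Span X d₁ → Span X d₂ → Span X (d₁.add d₂)
  | smul (a : ℂ) {d : Distr} : Span X d → Span X (Distr.smul a d)
  | congr {d d' : Distr} : Span X d → Cong d d' → Span X d'

/-! ### Realizability: unitary types -/

/-- t⃗ ⊩ A :  t⃗ evaluates to some vector of ⟦A⟧. -/
def Realizes (A : Set Distr) (t : Distr) : Prop := ∃ v ∈ A, Eval t v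

/-- |A| : the set of (closed) realizers of A. -/
def realizersOf (A : Set Distr) : Set Distr := {t | fvD t = ∅ ∧ Realizes A t}

/-! ### Type constructors -/

def UnitT : Set Distr := {Distr.single (.val .star)}

/-- ♭A : the basis of A. -/
def flatT (X : Set Distr) : Set Distr :=
  {e | ∃ d ∈ X, ∃ v : Val, (Term.val v) ∈ domD d ∧ e = Distr.single (.val v)}

/-- ♯A : the unitary span of A. -/
def sharpT (X : Set Distr) : Set Distr := {d | Span X d ∧ d ∈ Sphere}

/-- Linear extension of a value constructor. -/
def mapVD (f : Val → Val) : Distr → Distr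
  | .zero => .zero
  | .single (.val v) => .single (.val (f v))
  | .single t => .single t
  | .add d₁ d₂ => .add (mapVD f d₁) (mapVD f d₂)
  | .smul a d => .smul a (mapVD f d)

def inlD : Distr → Distr := mapVD Val.inl
def inrD : Distr → Distr := mapVD Val.inr

/-- Bilinear extension of pairing. -/
def pairD : Distr → Distr → Distr
  | .zero, _ => .zero
  | .single (.val v), w => mapVD (Val.pair v) w
  | .single t, _ => .single t
  | .add d₁ d₂, w => .add (pairD d₁ w) (pairD d₂ w)
  | .smul a d, w => .smul a (pairD d w)

/-- A + B (simple sum). -/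
def plusT (A B : Set Distr) : Set Distr :=
  {d | (∃ v ∈ A, d = inlD v) ∨ (∃ w ∈ B, d = inrD w)}

/-- A × B (simple product). -/
def timesT (A B : Set Distr) : Set Distr :=
  {d | ∃ v ∈ A, ∃ w ∈ B, d = pairD v w}

/-- A → B (pure arrow). -/
def arrowT (A B : Set Distr) : Set Distr :=
  {d | ∃ (x : ℕ) (b : Distr), d = Distr.single (.val (.lam x b)) ∧ fvD d = ∅ ∧
      ∀ v ∈ A, Realizes B (bsubst x b v)}

/-- Σᵢ αᵢ · λx.t⃗ᵢ  ↦  Σᵢ αᵢ · t⃗ᵢ  (strips the λx in front of each summand). -/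
def stripLam (x : ℕ) : Distr → Distr
  | .zero => .zero
  | .single (.val (.lam y b)) => if y = x then b else .single (.val (.lam y b))
  | .single t => .single t
  | .add d₁ d₂ => .add (stripLam x d₁) (stripLam x d₂)
  | .smul a d => .smul a (stripLam x d)

/-- A ⇒ B (unitary arrow). -/
def uarrowT (A B : Set Distr) : Set Distr :=
  {d | d ∈ Sphere ∧ ∃ x : ℕ,
      (∀ t ∈ domD d, ∃ b : Distr, t = Term.val (.lam x b)) ∧
      ∀ v ∈ A, Realizes B (bsubst x (stripLam x d) v)}

/-! ### Booleans -/

def ttD : Distr := .single (.val (.inl .star))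
def ffD : Distr := .single (.val (.inr .star))

/-- 𝔹 = 𝕌 + 𝕌. -/
def BoolT : Set Distr := plusT UnitT UnitT

/-- ♯𝔹, the type of unitary Booleans. -/
def sharpBool : Set Distr := sharpT BoolT

/-- Boolean projection π : Span({tt,ff}) → ℂ². -/
noncomputable def piB (d : Distr) : ℂ × ℂ :=
  (coeff d (.val (.inl .star)), coeff d (.val (.inr .star)))

/-- t⃗ represents the operator F : ℂ² → ℂ². -/
def Represents (td : Distr) (F : ℂ × ℂ → ℂ × ℂ) : Prop :=
  ∀ v, Span BoolT v → ∃ w, Span BoolT w ∧ Eval (appD td v) w ∧ piB w = F (piB v)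

/-- Hermitian inner product on ℂ². -/
def hinner (u v : ℂ × ℂ) : ℂ :=
  (starRingEnd ℂ) u.1 * v.1 + (starRingEnd ℂ) u.2 * v.2

/-- A unitary operator on ℂ². -/
def IsUnitaryOp (F : ℂ × ℂ → ℂ × ℂ) : Prop :=
  ∀ u v : ℂ × ℂ, hinner (F u) (F v) = hinner u v

/-! ### Typing contexts, substitutions, judgments -/

abbrev Ctx := List (ℕ × Set Distr)
abbrev Subst := List (ℕ × Distr)

/-- Applying a substitution, one bilinear substitution at a time. -/
def applySub : Distr → Subst → Distr
  | d, [] => d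
  | d, (x, w) :: σ => applySub (bsubst x d w) σ

/-- σ ∈ ⟦Γ⟧. -/
def SubMem (σ : Subst) (Γ : Ctx) : Prop :=
  List.Forall₂ (fun p q => p.1 = q.1 ∧ p.2 ∈ q.2) σ Γ

def ctxDom (Γ : Ctx) : Set ℕ := {x | ∃ A, (x, A) ∈ Γ}

/-- dom♯(Γ): the variables of Γ whose type is not a pure-value type. -/
def ctxDomSharp (Γ : Ctx) : Set ℕ := {x | ∃ A, (x, A) ∈ Γ ∧ flatT A ≠ A}

/-- All the types of the context are unitary types (subsets of the sphere). -/
def CtxUnitary (Γ : Ctx) : Prop := ∀ p ∈ Γ, p.2 ⊆ Sphere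

/-- Validity of the typing judgment  Γ ⊢ t⃗ : A. -/
def ValidJ (Γ : Ctx) (t : Distr) (A : Set Distr) : Prop :=
  ctxDomSharp Γ ⊆ (fvD t : Set ℕ) ∧ (fvD t : Set ℕ) ⊆ ctxDom Γ ∧
  ∀ σ : Subst, SubMem σ Γ → Realizes A (applySub t σ)

/-- Validity of the orthogonality judgment  Γ | Δ₁ ⊢ t⃗₁ ⊥ Δ₂ ⊢ t⃗₂ : A. -/
def OrthoJ (Γ Δ₁ Δ₂ : Ctx) (t₁ t₂ : Distr) (A : Set Distr) : Prop :=
  ValidJ (Γ ++ Δ₁) t₁ A ∧ ValidJ (Γ ++ Δ₂) t₂ A ∧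
  ∀ σ σ₁ σ₂ : Subst, SubMem σ Γ → SubMem σ₁ Δ₁ → SubMem σ₂ Δ₂ →
    ∀ v₁ v₂ : Distr, v₁ ∈ ClosedValD → v₂ ∈ ClosedValD →
      Eval (applySub t₁ (σ ++ σ₁)) v₁ → Eval (applySub t₂ (σ ++ σ₂)) v₂ →
      innerD v₁ v₂ = 0

end LinAlg

namespace LinAlg
set_option maxHeartbeats 1000000

/-! ### Auxiliary infrastructure -/

theorem Distr.ind {motive : Distr → Prop} (hz : motive .zero) (hs : ∀ t, motive (.single t))
    (ha : ∀ d e, motive d → motive e → motive (.add d e))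
    (hm : ∀ a d, motive d → motive (.smul a d)) : ∀ d, motive d := fun d =>
  Distr.rec (motive_1 := fun _ => True) (motive_2 := fun _ => True) (motive_3 := motive)
    (fun _ => trivial) (fun _ _ _ => trivial) trivial (fun _ _ _ _ => trivial)
    (fun _ _ => trivial) (fun _ _ => trivial) (fun _ _ => trivial)
    (fun _ _ _ _ => trivial) (fun _ _ _ _ => trivial) (fun _ _ _ _ _ _ => trivial)
    (fun _ _ _ _ _ _ _ _ => trivial) hz (fun t _ => hs t) ha hm d

/-- coefficients are invariant under ≡ -/
theorem coeff_cong {d e : Distr} (h : Cong d e) : ∀ t, coeff d t = coeff e t := by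
  induction h <;> intro t <;> simp_all [coeff] <;> ring

/-- domains are invariant under ≡ -/
theorem domD_cong {d e : Distr} (h : Cong d e) : domD d = domD e := by
  induction h with
  | addZero d => simp [domD]
  | oneSmul d => simp [domD]
  | smulSmul a b d => simp [domD]
  | addComm d₁ d₂ => simp [domD, Finset.union_comm]
  | addAssoc d₁ d₂ d₃ => simp [domD, Finset.union_assoc]
  | smulDistrib a b d => simp [domD]
  | smulAdd a d₁ d₂ => simp [domD]
  | refl d => rfl
  | symm _ ih => exact ih.symm
  | trans _ _ ih₁ ih₂ => exact ih₁.trans ih₂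
  | addCongr _ _ ih₁ ih₂ => simp [domD, ih₁, ih₂]
  | smulCongr a _ ih => simpa [domD] using ih

theorem coeff_of_not_mem_domD {t : Term} : ∀ {d : Distr}, t ∉ domD d → coeff d t = 0 := by
  intro d
  induction d using Distr.ind with
  | hz => intro _; rfl
  | hs s => intro h; simp [domD] at h; simp [coeff, Ne.symm h]
  | ha d e ihd ihe => intro h; simp [domD] at h; simp [coeff, ihd h.1, ihe h.2]
  | hm a d ih => intro h; simp [domD] at h; simp [coeff, ih h]
/-! ### Step and Eval machinery -/

theorem step_single {s : Term} {s' : Distr} (h : Atom s s') : Step (.single s) s' := by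
  refine ⟨1, s, s', .zero, ?_, ?_, h⟩
  · exact (Cong.trans (Cong.addZero _) (Cong.oneSmul _)).symm
  · exact (Cong.trans (Cong.addZero _) (Cong.oneSmul _)).symm

theorem step_cong_left {c d d' : Distr} (hc : Cong c d) (h : Step d d') : Step c d' := by
  obtain ⟨a, s, s', r, h1, h2, hA⟩ := h
  exact ⟨a, s, s', r, hc.trans h1, h2, hA⟩

theorem step_cong_right {d d' e : Distr} (h : Step d d') (hc : Cong d' e) : Step d e := by
  obtain ⟨a, s, s', r, h1, h2, hA⟩ := h
  exact ⟨a, s, s', r, h1, hc.symm.trans h2, hA⟩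

theorem step_add_left {d d' e : Distr} (h : Step d d') : Step (d.add e) (d'.add e) := by
  obtain ⟨a, s, s', r, h1, h2, hA⟩ := h
  exact ⟨a, s, s', r.add e, (h1.addCongr (.refl e)).trans (.addAssoc _ _ _),
    (h2.addCongr (.refl e)).trans (.addAssoc _ _ _), hA⟩

theorem step_add_right {d e e' : Distr} (h : Step e e') : Step (d.add e) (d.add e') := by
  obtain ⟨a, s, s', r, h1, h2, hA⟩ := h
  exact ⟨a, s, s', r.add d,
    (Cong.addComm d e).trans ((h1.addCongr (.refl d)).trans (.addAssoc _ _ _)),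
    (Cong.addComm d e').trans ((h2.addCongr (.refl d)).trans (.addAssoc _ _ _)), hA⟩

theorem step_smul {d d' : Distr} (α : ℂ) (h : Step d d') : Step (.smul α d) (.smul α d') := by
  obtain ⟨a, s, s', r, h1, h2, hA⟩ := h
  refine ⟨α * a, s, s', .smul α r, ?_, ?_, hA⟩
  · exact (Cong.smulCongr α h1).trans ((Cong.smulAdd α _ _).trans
      ((Cong.smulSmul α a _).addCongr (.refl _)))
  · exact (Cong.smulCongr α h2).trans ((Cong.smulAdd α _ _).trans
      ((Cong.smulSmul α a _).addCongr (.refl _)))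

theorem eval_add {d d' e e' : Distr} (h1 : Eval d d') (h2 : Eval e e') :
    Eval (d.add e) (d'.add e') :=
  Relation.ReflTransGen.trans
    (h1.lift (fun z => z.add e) fun _ _ h => step_add_left h)
    (h2.lift (fun z => Distr.add d' z) fun _ _ h => step_add_right h)

theorem eval_smul {d d' : Distr} (α : ℂ) (h : Eval d d') : Eval (.smul α d) (.smul α d') :=
  h.lift (fun z => Distr.smul α z) fun _ _ h => step_smul α h

theorem eval_transport {u u' v : Distr} (hc : Cong u u') (he : Eval u' v) :
    ∃ v', Eval u v' ∧ Cong v' v := by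
  rcases he.cases_head with rfl | ⟨c, hs, hev⟩
  · exact ⟨u, .refl, hc⟩
  · exact ⟨v, .head (step_cong_left hc hs) hev, .refl v⟩

/-! ### Values do not reduce -/

theorem atom_not_val {v : Val} {e : Distr} (h : Atom (.val v) e) : False := by cases h

theorem atom_det {t : Term} {d : Distr} (h : Atom t d) : ∀ {d' : Distr}, Atom t d' → d = d' := by
  induction h with
  | beta x b v => intro d' h'; cases h' with
    | beta => rfl
    | appR _ ha => exact absurd ha atom_not_val
    | appL _ ha => exact absurd ha atom_not_val
  | seqStar s => intro d' h'; cases h' with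
    | seqStar => rfl
    | seqC _ ha => exact absurd ha atom_not_val
  | letPair x y v w s => intro d' h'; cases h' with
    | letPair => rfl
    | letC _ _ _ ha => exact absurd ha atom_not_val
  | matchInl v y s₁ z s₂ => intro d' h'; cases h' with
    | matchInl => rfl
    | matcC _ _ _ _ ha => exact absurd ha atom_not_val
  | matchInr v y s₁ z s₂ => intro d' h'; cases h' with
    | matchInr => rfl
    | matcC _ _ _ _ ha => exact absurd ha atom_not_val
  | appR s ha ih => intro d' h'; cases h' with
    | beta => exact absurd ha atom_not_val
    | appR _ hb => rw [ih hb]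
    | appL _ _ => exact absurd ha atom_not_val
  | appL v ha ih => intro d' h'; cases h' with
    | beta => exact absurd ha atom_not_val
    | appR _ hb => exact absurd hb atom_not_val
    | appL _ hb => rw [ih hb]
  | seqC s ha ih => intro d' h'; cases h' with
    | seqStar => exact absurd ha atom_not_val
    | seqC _ hb => rw [ih hb]
  | letC x y s ha ih => intro d' h'; cases h' with
    | letPair => exact absurd ha atom_not_val
    | letC _ _ _ hb => rw [ih hb]
  | matcC y s₁ z s₂ ha ih => intro d' h'; cases h' with
    | matchInl => exact absurd ha atom_not_val
    | matchInr => exact absurd ha atom_not_val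
    | matcC _ _ _ _ hb => rw [ih hb]
/-! ### Full development and the Z-property -/

open Classical in
noncomputable def devT (t : Term) : Distr :=
  if h : ∃ d, Atom t d then h.choose else .single t

theorem devT_atom {t : Term} {d : Distr} (h : Atom t d) : Atom t (devT t) := by
  rw [devT]
  rw [dif_pos (⟨d, h⟩ : ∃ d, Atom t d)]
  exact (Exists.choose_spec (⟨d, h⟩ : ∃ d, Atom t d))

theorem devT_spec {t : Term} {d : Distr} (h : Atom t d) : devT t = d :=
  atom_det (devT_atom h) h

noncomputable def dev : Distr → Distr
  | .zero => .zero
  | .single t => devT t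
  | .add d e => .add (dev d) (dev e)
  | .smul a d => .smul a (dev d)

theorem dev_cong {d e : Distr} (h : Cong d e) : Cong (dev d) (dev e) := by
  induction h with
  | addZero d => exact Cong.addZero _
  | oneSmul d => exact Cong.oneSmul _
  | smulSmul a b d => exact Cong.smulSmul _ _ _
  | addComm d₁ d₂ => exact Cong.addComm _ _
  | addAssoc d₁ d₂ d₃ => exact Cong.addAssoc _ _ _
  | smulDistrib a b d => exact Cong.smulDistrib _ _ _
  | smulAdd a d₁ d₂ => exact Cong.smulAdd _ _ _
  | refl d => exact Cong.refl _
  | symm _ ih => exact ih.symm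
  | trans _ _ ih₁ ih₂ => exact ih₁.trans ih₂
  | addCongr _ _ ih₁ ih₂ => exact ih₁.addCongr ih₂
  | smulCongr a _ ih => exact ih.smulCongr a

theorem eval_dev : ∀ d : Distr, Eval d (dev d) := by
  intro d
  induction d using Distr.ind with
  | hz => exact .refl
  | hs t =>
      by_cases h : ∃ e, Atom t e
      · obtain ⟨e, he⟩ := h
        exact Relation.ReflTransGen.single (step_single (devT_atom he))
      · show Eval _ (devT t)
        rw [devT, dif_neg h]
        exact .refl
  | ha d e ihd ihe => exact eval_add ihd ihe
  | hm a d ih => exact eval_smul a ih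

/-- Evaluation up to congruence at the end. -/
def EvalC (u v : Distr) : Prop := ∃ v₀, Eval u v₀ ∧ Cong v₀ v

theorem EvalC.rfl {d : Distr} : EvalC d d := ⟨d, .refl, .refl d⟩

theorem EvalC.of_eval {u v : Distr} (h : Eval u v) : EvalC u v := ⟨v, h, .refl v⟩

theorem EvalC.of_cong {u v : Distr} (h : Cong u v) : EvalC u v := ⟨u, .refl, h⟩

theorem EvalC.trans {u v w : Distr} (h1 : EvalC u v) (h2 : EvalC v w) : EvalC u w := by
  obtain ⟨v₀, he1, hc1⟩ := h1
  obtain ⟨w₀, he2, hc2⟩ := h2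
  obtain ⟨w₁, he3, hc3⟩ := eval_transport hc1 he2
  exact ⟨w₁, he1.trans he3, hc3.trans hc2⟩

theorem dev_decomp (a : ℂ) {s : Term} {s' : Distr} (r : Distr) (h : Atom s s') :
    dev (Distr.add (.smul a (.single s)) r) = Distr.add (.smul a s') (dev r) := by
  show Distr.add (.smul a (devT s)) (dev r) = _
  rw [devT_spec h]

/-- Z-property, part 1: the target of a step evaluates to the full development of its source. -/
theorem step_evalC_dev {x y : Distr} (h : Step x y) : EvalC y (dev x) := by
  obtain ⟨a, s, s', r, h1, h2, hA⟩ := h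
  have hx : Cong (dev x) (Distr.add (.smul a s') (dev r)) := by
    have := dev_cong h1; rwa [dev_decomp a r hA] at this
  have hev : Eval (Distr.add (.smul a s') r) (Distr.add (.smul a s') (dev r)) :=
    eval_add .refl (eval_dev r)
  obtain ⟨z, hez, hcz⟩ := eval_transport h2 hev
  exact ⟨z, hez, hcz.trans hx.symm⟩

/-- Z-property, part 2: dev is monotone along steps. -/
theorem step_dev_evalC_dev {x y : Distr} (h : Step x y) : EvalC (dev x) (dev y) := by
  obtain ⟨a, s, s', r, h1, h2, hA⟩ := h
  have hx : Cong (dev x) (Distr.add (.smul a s') (dev r)) := by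
    have := dev_cong h1; rwa [dev_decomp a r hA] at this
  have hy : Cong (Distr.add (.smul a (dev s')) (dev r)) (dev y) := by
    have := dev_cong h2
    exact (this.symm : Cong (dev (Distr.add (.smul a s') r)) (dev y))
  have hev : Eval (Distr.add (.smul a s') (dev r)) (Distr.add (.smul a (dev s')) (dev r)) :=
    eval_add (eval_smul a (eval_dev s')) .refl
  obtain ⟨z, hez, hcz⟩ := eval_transport hx hev
  exact ⟨z, hez, hcz.trans hy⟩

theorem eval_dev_evalC_dev {x y : Distr} (h : Eval x y) : EvalC (dev x) (dev y) := by
  induction h with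
  | refl => exact EvalC.rfl
  | tail _ hst ih => exact ih.trans (step_dev_evalC_dev hst)

theorem evalC_dev_evalC_dev {x y : Distr} (h : EvalC x y) : EvalC (dev x) (dev y) := by
  obtain ⟨y₀, he, hc⟩ := h
  exact (eval_dev_evalC_dev he).trans (EvalC.of_cong (dev_cong hc))

/-! ### Confluence -/

def TStep (u v : Distr) : Prop := EvalC u v ∧ EvalC v (dev u)

theorem step_TStep {u v : Distr} (h : Step u v) : TStep u v :=
  ⟨EvalC.of_eval (Relation.ReflTransGen.single h), step_evalC_dev h⟩

theorem TStep_diamond {x y z : Distr} (h1 : TStep x y) (h2 : TStep x z) :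
    TStep y (dev x) ∧ TStep z (dev x) :=
  ⟨⟨h1.2, evalC_dev_evalC_dev h1.1⟩, ⟨h2.2, evalC_dev_evalC_dev h2.1⟩⟩

theorem rtg_strip {R : Distr → Distr → Prop}
    (hdia : ∀ x y z, R x y → R x z → ∃ w, R y w ∧ R z w)
    {x y z : Distr} (hxy : R x y) (hxz : Relation.ReflTransGen R x z) :
    ∃ w, Relation.ReflTransGen R y w ∧ R z w := by
  induction hxz with
  | refl => exact ⟨y, .refl, hxy⟩
  | tail _ hcz ih =>
      obtain ⟨w, hyw, hcw⟩ := ih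
      obtain ⟨u, hzu, hwu⟩ := hdia _ _ _ hcz hcw
      exact ⟨u, hyw.tail hwu, hzu⟩

theorem rtg_join {R : Distr → Distr → Prop}
    (hdia : ∀ x y z, R x y → R x z → ∃ w, R y w ∧ R z w)
    {x y z : Distr} (hxy : Relation.ReflTransGen R x y) (hxz : Relation.ReflTransGen R x z) :
    ∃ w, Relation.ReflTransGen R y w ∧ Relation.ReflTransGen R z w := by
  induction hxy with
  | refl => exact ⟨z, hxz, .refl⟩
  | tail _ hcy ih =>
      obtain ⟨w, hcw, hzw⟩ := ih
      obtain ⟨u, hyu, hwu⟩ := rtg_strip hdia hcy hcw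
      exact ⟨u, hyu, hzw.tail hwu⟩

theorem rtg_TStep_evalC {u v : Distr} (h : Relation.ReflTransGen TStep u v) : EvalC u v := by
  induction h with
  | refl => exact EvalC.rfl
  | tail _ hst ih => exact ih.trans hst.1

/-- normal forms -/
def NormalD (d : Distr) : Prop := ∀ e, ¬ Step d e

theorem eval_of_normal {d e : Distr} (hn : NormalD d) (h : Eval d e) : e = d := by
  rcases h.cases_head with rfl | ⟨c, hs, _⟩
  · rfl
  · exact absurd hs (hn c)

/-- Confluence: two normal results of the same distribution are congruent. -/
theorem confluence {d w₁ w₂ : Distr} (h1 : Eval d w₁) (h2 : Eval d w₂)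
    (n1 : NormalD w₁) (n2 : NormalD w₂) : Cong w₁ w₂ := by
  have t1 : Relation.ReflTransGen TStep d w₁ := h1.lift id fun _ _ h => step_TStep h
  have t2 : Relation.ReflTransGen TStep d w₂ := h2.lift id fun _ _ h => step_TStep h
  have hdia : ∀ x y z : Distr, TStep x y → TStep x z → ∃ w, TStep y w ∧ TStep z w :=
    fun x y z hy hz => ⟨dev x, (TStep_diamond hy hz).1, (TStep_diamond hy hz).2⟩
  obtain ⟨e, he1, he2⟩ := rtg_join hdia t1 t2
  obtain ⟨e₁, hev1, hc1⟩ := rtg_TStep_evalC he1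
  obtain ⟨e₂, hev2, hc2⟩ := rtg_TStep_evalC he2
  rw [eval_of_normal n1 hev1] at hc1
  rw [eval_of_normal n2 hev2] at hc2
  exact hc1.trans hc2.symm

/-- half-confluence: if d evaluates to a normal w and also to m, then m evaluates
to something congruent to w. -/
theorem confluence_half {d w m : Distr} (h1 : Eval d w) (h2 : Eval d m)
    (n1 : NormalD w) : ∃ u, Eval m u ∧ Cong u w := by
  have t1 : Relation.ReflTransGen TStep d w := h1.lift id fun _ _ h => step_TStep h
  have t2 : Relation.ReflTransGen TStep d m := h2.lift id fun _ _ h => step_TStep h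
  have hdia : ∀ x y z : Distr, TStep x y → TStep x z → ∃ w, TStep y w ∧ TStep z w :=
    fun x y z hy hz => ⟨dev x, (TStep_diamond hy hz).1, (TStep_diamond hy hz).2⟩
  obtain ⟨e, he1, he2⟩ := rtg_join hdia t1 t2
  obtain ⟨e₁, hev1, hc1⟩ := rtg_TStep_evalC he1
  obtain ⟨e₂, hev2, hc2⟩ := rtg_TStep_evalC he2
  rw [eval_of_normal n1 hev1] at hc1
  exact ⟨e₂, hev2, hc2.trans hc1.symm⟩
/-! ### Value distributions are normal -/

theorem isValT_of_mem_domD : ∀ {d : Distr}, IsValD d → ∀ {t}, t ∈ domD d → IsValT t := by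
  intro d
  induction d using Distr.ind with
  | hz => intro _ t ht; simp [domD] at ht
  | hs s => intro h t ht; simp [domD] at ht; rwa [ht]
  | ha d e ihd ihe => intro h t ht; simp [domD] at ht
                      rcases ht with ht | ht
                      · exact ihd h.1 ht
                      · exact ihe h.2 ht
  | hm a d ih => intro h t ht; exact ih h ht

theorem valD_normal {w : Distr} (h : IsValD w) : NormalD w := by
  rintro e ⟨a, s, s', r, hc, _, hA⟩
  have hs : s ∈ domD w := by
    rw [domD_cong hc]; simp [domD]
  have := isValT_of_mem_domD h hs
  cases s with
  | val v => exact atom_not_val hA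
  | app _ _ => exact this
  | seq _ _ => exact this
  | letp _ _ _ _ => exact this
  | matc _ _ _ _ _ => exact this

/-! ### Facts about Span BoolT -/

theorem mem_BoolT {d : Distr} (h : d ∈ BoolT) : d = ttD ∨ d = ffD := by
  rcases h with ⟨v, hv, rfl⟩ | ⟨w, hw, rfl⟩
  · left; rw [show v = Distr.single (.val .star) from hv]; rfl
  · right; rw [show w = Distr.single (.val .star) from hw]; rfl

theorem ttD_mem_BoolT : ttD ∈ BoolT := Or.inl ⟨_, rfl, rfl⟩
theorem ffD_mem_BoolT : ffD ∈ BoolT := Or.inr ⟨_, rfl, rfl⟩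

theorem span_domD {v : Distr} (h : Span BoolT v) :
    domD v ⊆ {Term.val (.inl .star), Term.val (.inr .star)} := by
  induction h with
  | mem hd => rcases mem_BoolT hd with rfl | rfl <;> simp [ttD, ffD, domD]
  | zero => simp [domD]
  | add _ _ ih₁ ih₂ =>
      show domD _ ∪ domD _ ⊆ _
      exact Finset.union_subset ih₁ ih₂
  | smul a _ ih => simpa [domD] using ih
  | congr _ hc ih => rwa [domD_cong hc] at ih

theorem span_isValD {v : Distr} (h : Span BoolT v) : IsValD v := by
  have hd := span_domD h
  clear h
  induction v using Distr.ind with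
  | hz => trivial
  | hs t => have h1 : t ∈ domD (Distr.single t) := by simp [domD]
            have h2 := hd h1
            simp only [Finset.mem_insert, Finset.mem_singleton] at h2
            rcases h2 with rfl | rfl <;> trivial
  | ha d e ihd ihe =>
      simp only [domD] at hd
      exact ⟨ihd (fun t ht => hd (Finset.mem_union_left _ ht)),
             ihe (fun t ht => hd (Finset.mem_union_right _ ht))⟩
  | hm a d ih => exact ih hd

theorem span_fvD {v : Distr} (h : Span BoolT v) : fvD v = ∅ := by
  have hd := span_domD h
  clear h
  induction v using Distr.ind with
  | hz => rfl
  | hs t => have h1 : t ∈ domD (Distr.single t) := by simp [domD]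
            have h2 := hd h1
            simp only [Finset.mem_insert, Finset.mem_singleton] at h2
            rcases h2 with rfl | rfl <;> simp [fvD, fvT, fvV]
  | ha d e ihd ihe =>
      simp only [domD] at hd
      have h1 := ihd (fun t ht => hd (Finset.mem_union_left _ ht))
      have h2 := ihe (fun t ht => hd (Finset.mem_union_right _ ht))
      simp [fvD, h1, h2]
  | hm a d ih => exact ih hd

theorem span_cong {X : Set Distr} {d e : Distr} (h : Span X d) (hc : Cong d e) : Span X e :=
  Span.congr h hc
/-! ### Semantic computations -/

theorem piB_cong {d e : Distr} (h : Cong d e) : piB d = piB e := by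
  simp [piB, coeff_cong h]

theorem innerD_eq_hinner {v w : Distr}
    (h : domD v ⊆ {Term.val (.inl .star), Term.val (.inr .star)}) :
    innerD v w = hinner (piB v) (piB w) := by
  have hvan : ∀ t ∈ ({Term.val (.inl .star), Term.val (.inr .star)} : Finset Term),
      t ∉ domD v → (starRingEnd ℂ) (coeff v t) * coeff w t = 0 := by
    intro t _ ht
    rw [coeff_of_not_mem_domD ht, map_zero, zero_mul]
  have hsub : innerD v w = ∑ t ∈ ({Term.val (.inl .star), Term.val (.inr .star)} : Finset Term),
      (starRingEnd ℂ) (coeff v t) * coeff w t :=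
    Finset.sum_subset h hvan
  rw [hsub, Finset.sum_insert (by simp), Finset.sum_singleton]
  rfl

theorem hinner_self (u : ℂ × ℂ) :
    hinner u u = ((Complex.normSq u.1 + Complex.normSq u.2 : ℝ) : ℂ) := by
  rw [hinner, mul_comm ((starRingEnd ℂ) u.1) u.1, mul_comm ((starRingEnd ℂ) u.2) u.2,
    Complex.mul_conj, Complex.mul_conj]
  push_cast
  ring

theorem mem_sharpBool_of {v : Distr} (hs : Span BoolT v)
    (h1 : hinner (piB v) (piB v) = 1) : v ∈ sharpBool := by
  refine ⟨hs, ⟨⟨span_isValD hs, span_fvD hs⟩, ?_⟩⟩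
  rw [normD, innerD_eq_hinner (span_domD hs), h1]
  simp

theorem hinner_one_of_sphere {v : Distr} (hs : Span BoolT v) (hv : v ∈ Sphere) :
    hinner (piB v) (piB v) = 1 := by
  obtain ⟨_, hn⟩ := hv
  rw [normD, innerD_eq_hinner (span_domD hs), hinner_self] at hn
  rw [hinner_self]
  rw [Complex.ofReal_re, Real.sqrt_eq_one] at hn
  rw [hn]
  norm_num

theorem piB_tt : piB ttD = (1, 0) := by
  simp [piB, coeff, ttD, Prod.ext_iff]

theorem piB_ff : piB ffD = (0, 1) := by
  simp [piB, coeff, ffD, Prod.ext_iff]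

theorem piB_comb (γ δ : ℂ) (d e : Distr) :
    piB (Distr.add (.smul γ d) (.smul δ e)) = γ • piB d + δ • piB e := by
  simp [piB, coeff, Prod.ext_iff, smul_eq_mul]

theorem piB_zero : piB .zero = 0 := by
  simp [piB, coeff, Prod.ext_iff]

theorem piB_add (d e : Distr) : piB (d.add e) = piB d + piB e := by
  simp [piB, coeff, Prod.ext_iff]

theorem piB_smul (a : ℂ) (d : Distr) : piB (.smul a d) = a • piB d := by
  simp [piB, coeff, Prod.ext_iff, smul_eq_mul]

theorem hinner_comb (γ δ γ' δ' : ℂ) (A B : ℂ × ℂ) :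
    hinner (γ • A + δ • B) (γ' • A + δ' • B) =
      (starRingEnd ℂ) γ * γ' * hinner A A + (starRingEnd ℂ) γ * δ' * hinner A B +
      (starRingEnd ℂ) δ * γ' * hinner B A + (starRingEnd ℂ) δ * δ' * hinner B B := by
  simp only [hinner, Prod.fst_add, Prod.snd_add, Prod.smul_fst, Prod.smul_snd,
    smul_eq_mul, map_add, map_mul]
  ring

/-- the test vectors γ·tt + δ·ff -/
def testVec (γ δ : ℂ) : Distr := Distr.add (.smul γ ttD) (.smul δ ffD)

theorem span_testVec (γ δ : ℂ) : Span BoolT (testVec γ δ) :=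
  Span.add (Span.smul γ (Span.mem ttD_mem_BoolT)) (Span.smul δ (Span.mem ffD_mem_BoolT))

theorem piB_testVec (γ δ : ℂ) : piB (testVec γ δ) = (γ, δ) := by
  rw [testVec, piB_comb, piB_tt, piB_ff]
  simp [Prod.ext_iff]

theorem testVec_mem_sharpBool {γ δ : ℂ} (h : Complex.normSq γ + Complex.normSq δ = 1) :
    testVec γ δ ∈ sharpBool := by
  apply mem_sharpBool_of (span_testVec γ δ)
  rw [piB_testVec, hinner_self]
  simp [h]
/-! ### Application lemmas -/

theorem appTD_cong (s : Term) {d e : Distr} (h : Cong d e) :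
    Cong (appTD s d) (appTD s e) := by
  induction h with
  | addZero d => exact Cong.addZero _
  | oneSmul d => exact Cong.oneSmul _
  | smulSmul a b d => exact Cong.smulSmul _ _ _
  | addComm d₁ d₂ => exact Cong.addComm _ _
  | addAssoc d₁ d₂ d₃ => exact Cong.addAssoc _ _ _
  | smulDistrib a b d => exact Cong.smulDistrib _ _ _
  | smulAdd a d₁ d₂ => exact Cong.smulAdd _ _ _
  | refl d => exact Cong.refl _
  | symm _ ih => exact ih.symm
  | trans _ _ ih₁ ih₂ => exact ih₁.trans ih₂
  | addCongr _ _ ih₁ ih₂ => exact ih₁.addCongr ih₂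
  | smulCongr a _ ih => exact ih.smulCongr a

theorem eval_app_bsubst (x : ℕ) (b : Distr) :
    ∀ v : Distr, (∀ t ∈ domD v, ∃ u : Val, t = .val u) →
      Eval (appTD (.val (.lam x b)) v) (bsubst x b v) := by
  intro v
  induction v using Distr.ind with
  | hz => intro _; exact .refl
  | hs t =>
      intro h
      obtain ⟨u, rfl⟩ := h t (by simp [domD])
      exact Relation.ReflTransGen.single (step_single (Atom.beta x b u))
  | ha d e ihd ihe =>
      intro h
      exact eval_add (ihd fun t ht => h t (Finset.mem_union_left _ ht))
        (ihe fun t ht => h t (Finset.mem_union_right _ ht))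
  | hm a d ih => intro h; exact eval_smul a (ih h)

theorem span_domD_val {v : Distr} (h : Span BoolT v) :
    ∀ t ∈ domD v, ∃ u : Val, t = .val u := by
  intro t ht
  have := span_domD h ht
  simp only [Finset.mem_insert, Finset.mem_singleton] at this
  rcases this with rfl | rfl
  · exact ⟨_, rfl⟩
  · exact ⟨_, rfl⟩

/-! ### The forward direction -/

theorem forward_main (x : ℕ) (b : Distr)
    (H : ∀ v ∈ sharpBool, Realizes sharpBool (bsubst x b v)) :
    ∃ F : ℂ × ℂ → ℂ × ℂ, IsUnitaryOp F ∧
      Represents (Distr.single (.val (.lam x b))) F := by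
  have htt : ttD ∈ sharpBool := by
    apply mem_sharpBool_of (Span.mem ttD_mem_BoolT)
    rw [piB_tt, hinner_self]; simp
  have hff : ffD ∈ sharpBool := by
    apply mem_sharpBool_of (Span.mem ffD_mem_BoolT)
    rw [piB_ff, hinner_self]; simp
  obtain ⟨wt, hwt_mem, hwt_ev⟩ := H ttD htt
  obtain ⟨wf, hwf_mem, hwf_ev⟩ := H ffD hff
  set A := piB wt with hA
  set B := piB wf with hB
  have hAA : hinner A A = 1 := hinner_one_of_sphere hwt_mem.1 hwt_mem.2
  have hBB : hinner B B = 1 := hinner_one_of_sphere hwf_mem.1 hwf_mem.2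
  -- key: images of unit test vectors have norm 1
  have key : ∀ γ δ : ℂ, Complex.normSq γ + Complex.normSq δ = 1 →
      hinner (γ • A + δ • B) (γ • A + δ • B) = 1 := by
    intro γ δ hγδ
    obtain ⟨u, hu_mem, hu_ev⟩ := H (testVec γ δ) (testVec_mem_sharpBool hγδ)
    have hm_ev : Eval (bsubst x b (testVec γ δ))
        (Distr.add (.smul γ wt) (.smul δ wf)) :=
      eval_add (eval_smul γ hwt_ev) (eval_smul δ hwf_ev)
    have hm_val : IsValD (Distr.add (.smul γ wt) (.smul δ wf)) :=
      ⟨hwt_mem.2.1.1, hwf_mem.2.1.1⟩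
    have hu_val : IsValD u := hu_mem.2.1.1
    have hcong : Cong (Distr.add (.smul γ wt) (.smul δ wf)) u :=
      confluence hm_ev hu_ev (valD_normal hm_val) (valD_normal hu_val)
    have hpi : γ • A + δ • B = piB u := by
      rw [← piB_cong hcong, piB_comb]
    rw [hpi]
    exact hinner_one_of_sphere hu_mem.1 hu_mem.2
  -- orthonormality
  set r : ℂ := ((Real.sqrt 2 : ℝ) : ℂ)⁻¹ with hr
  have hr2 : Complex.normSq r + Complex.normSq r = 1 := by
    rw [hr, Complex.normSq_inv, Complex.normSq_ofReal, Real.mul_self_sqrt (by norm_num)]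
    norm_num
  have hri : Complex.normSq r + Complex.normSq (r * Complex.I) = 1 := by
    rw [Complex.normSq_mul, Complex.normSq_I, mul_one]
    exact hr2
  have hcr : (starRingEnd ℂ) r = r := by
    rw [hr, map_inv₀, Complex.conj_ofReal]
  have hrr : r * r = 2⁻¹ := by
    rw [hr, ← mul_inv, ← Complex.ofReal_mul, Real.mul_self_sqrt (by norm_num)]
    norm_num
  have e1 := key r r hr2
  have e2 := key r (r * Complex.I) hri
  rw [hinner_comb, hAA, hBB, hcr, hrr] at e1
  rw [hinner_comb, hAA, hBB, map_mul, hcr, Complex.conj_I] at e2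
  set X := hinner A B with hX
  set Y := hinner B A with hY
  have h4 : X + Y = 0 := by linear_combination 2 * e1
  have e2' : r * r + r * r * Complex.I * X - r * r * Complex.I * Y
      - r * r * (Complex.I * Complex.I) = 1 := by linear_combination e2
  rw [hrr, Complex.I_mul_I] at e2'
  have h5 : Complex.I * (X - Y) = 0 := by linear_combination 2 * e2'
  have h6 : X - Y = 0 := by
    rcases mul_eq_zero.mp h5 with h | h
    · exact absurd h Complex.I_ne_zero
    · exact h
  have hAB : X = 0 := by linear_combination (h4 + h6) / 2
  have hBA : Y = 0 := by linear_combination (h4 - h6) / 2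
  refine ⟨fun p => p.1 • A + p.2 • B, ?_, ?_⟩
  · intro u v
    rw [hinner_comb, hAA, hBB, ← hX, ← hY, hAB, hBA]
    simp only [hinner]
    ring
  · -- Represents
    intro v hv
    have lemA : ∀ v, Span BoolT v → ∃ w, Span BoolT w ∧
        Eval (appTD (.val (.lam x b)) v) w ∧
        piB w = (piB v).1 • A + (piB v).2 • B := by
      intro v hv
      induction hv with
      | mem hd =>
          rcases mem_BoolT hd with rfl | rfl
          · refine ⟨wt, hwt_mem.1, ?_, ?_⟩
            · exact Relation.ReflTransGen.head
                (step_single (Atom.beta x b (.inl .star))) hwt_ev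
            · rw [piB_tt]; simp [hA]
          · refine ⟨wf, hwf_mem.1, ?_, ?_⟩
            · exact Relation.ReflTransGen.head
                (step_single (Atom.beta x b (.inr .star))) hwf_ev
            · rw [piB_ff]; simp [hB]
      | zero =>
          refine ⟨.zero, Span.zero, .refl, ?_⟩
          rw [piB_zero]; simp
      | add h1 h2 ih1 ih2 =>
          obtain ⟨w1, hs1, he1, hp1⟩ := ih1
          obtain ⟨w2, hs2, he2, hp2⟩ := ih2
          refine ⟨w1.add w2, Span.add hs1 hs2, eval_add he1 he2, ?_⟩
          rw [piB_add, piB_add, hp1, hp2, Prod.fst_add, Prod.snd_add]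
          rw [Prod.ext_iff]
          constructor <;>
            simp [Prod.fst_add, Prod.snd_add, Prod.smul_fst, Prod.smul_snd, smul_eq_mul] <;>
            ring
      | smul a h ih =>
          obtain ⟨w, hs, he, hp⟩ := ih
          refine ⟨.smul a w, Span.smul a hs, eval_smul a he, ?_⟩
          rw [piB_smul, piB_smul, hp, Prod.smul_fst, Prod.smul_snd]
          rw [Prod.ext_iff]
          constructor <;>
            simp [Prod.fst_add, Prod.snd_add, Prod.smul_fst, Prod.smul_snd, smul_eq_mul] <;>
            ring
      | congr h hc ih =>
          obtain ⟨w, hs, he, hp⟩ := ih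
          obtain ⟨w', he', hc'⟩ := eval_transport (appTD_cong _ hc.symm) he
          refine ⟨w', span_cong hs hc'.symm, he', ?_⟩
          rw [piB_cong hc', hp, ← piB_cong hc]
    obtain ⟨w, hs, he, hp⟩ := lemA v hv
    exact ⟨w, hs, he, hp⟩

/-! ### The reverse direction -/

theorem reverse_main (x : ℕ) (b : Distr) (F : ℂ × ℂ → ℂ × ℂ) (hU : IsUnitaryOp F)
    (hR : Represents (Distr.single (.val (.lam x b))) F) :
    ∀ v ∈ sharpBool, Realizes sharpBool (bsubst x b v) := by
  intro v hv
  obtain ⟨hSpan, hSph⟩ := hv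
  obtain ⟨w, hwSpan, hwEval, hwPi⟩ := hR v hSpan
  have hbs : Eval (appTD (.val (.lam x b)) v) (bsubst x b v) :=
    eval_app_bsubst x b v (span_domD_val hSpan)
  have hwNormal : NormalD w := valD_normal (span_isValD hwSpan)
  obtain ⟨u, huEval, huCong⟩ := confluence_half hwEval hbs hwNormal
  refine ⟨u, ?_, huEval⟩
  apply mem_sharpBool_of (span_cong hwSpan huCong.symm)
  rw [piB_cong huCong, hwPi, hU (piB v) (piB v)]
  exact hinner_one_of_sphere hSpan hSph
/-- A closed λ-abstraction is a value of type ♯𝔹→♯𝔹 iff it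
represents a unitary operator on ℂ². -/
theorem charac_values_sharpBool_arrow (x : ℕ) (b : Distr)
    (hclosed : fvD (Distr.single (.val (.lam x b))) = ∅) :
    Distr.single (.val (.lam x b)) ∈ arrowT sharpBool sharpBool ↔
      ∃ F : ℂ × ℂ → ℂ × ℂ, IsUnitaryOp F ∧
        Represents (Distr.single (.val (.lam x b))) F := by
  constructor
  · rintro ⟨x', b', heq, -, hH⟩
    have hx : x = x' ∧ b = b' := by
      simpa [Distr.single.injEq, Term.val.injEq, Val.lam.injEq] using heq
    obtain ⟨rfl, rfl⟩ := hx
    exact forward_main x b hH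
  · rintro ⟨F, hU, hR⟩
    exact ⟨x, b, rfl, hclosed, reverse_main x b F hU hR⟩

end LinAlg
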